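/- Every σ ∈ Ω_{[+]}(M,ℂ) decomposes uniquely as σ = ρ ∧ θ with ρ ∈ Ω_{[+]}(M,ℂ) real and θ of modulus 1 (i.e. θ ∧ θ̄ = 1); moreover ρ and θ are closed if σ is closed. -/

import Mathlib

section Aux
variable {R : Type*} [CommRing R]

lemma nil_mul {a b : R} (ha : IsNilpotent a) : IsNilpotent (a * b) :=
  (Commute.all a b).isNilpotent_mul_right ha

/-- Existence of unipotent square roots by Newton iteration. -/
lemma sqrt_exists (h2 : Invertible (2 : R)) :
    ∀ n : ℕ, ∀ u y : R, IsNilpotent (y - 1) → (y ^ 2 - u) ^ n = 0 →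
      ∃ z : R, IsNilpotent (z - 1) ∧ z ^ 2 = u := by
  intro n
  induction n using Nat.strong_induction_on with
  | _ n ih =>
  intro u y hy he
  match n with
  | 0 =>
    simp only [pow_zero] at he
    have hall : ∀ r : R, r = 0 := fun r => by rw [← mul_one r, he, mul_zero]
    exact ⟨y, hy, by rw [hall (y ^ 2), hall u]⟩
  | 1 =>
    simp only [pow_one, sub_eq_zero] at he
    exact ⟨y, hy, he⟩
  | (m+2) =>
    have hyu : IsUnit y := by
      have := hy.isUnit_one_add
      rwa [add_sub_cancel] at this
    set w := Ring.inverse y with hw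
    have hyw : y * w = 1 := Ring.mul_inverse_cancel y hyu
    set e := y ^ 2 - u with hedef
    have hen : IsNilpotent e := ⟨m + 2, he⟩
    set c := ⅟(2:R) * w with hc
    set z := y - e * c with hz
    have key : z ^ 2 - u = e ^ 2 * c ^ 2 := by
      have h1 : (2 : R) * ⅟(2:R) = 1 := mul_invOf_self 2
      have : z ^ 2 - u = e - 2 * y * (e * c) + e ^ 2 * c ^ 2 := by
        simp only [hz, hedef]; ring
      rw [this, show 2 * y * (e * c) = e * ((2 * ⅟(2:R)) * (y * w)) by rw [hc]; ring,
        h1, hyw, mul_one, mul_one, sub_self, zero_add]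
    have hlt : (m + 3) / 2 < m + 2 := by omega
    have hz2 : (z ^ 2 - u) ^ ((m + 3) / 2) = 0 := by
      rw [key, mul_pow, ← pow_mul]
      have : e ^ ((m + 2) * 1) = 0 := by simpa using he
      have hdvd : m + 2 ≤ 2 * ((m + 3) / 2) := by omega
      rw [show e ^ (2 * ((m + 3) / 2)) = e ^ (m + 2) * e ^ (2 * ((m + 3) / 2) - (m + 2)) by
        rw [← pow_add]; congr 1; omega, he, zero_mul, zero_mul]
    have hznil : IsNilpotent (z - 1) := by
      have : z - 1 = (y - 1) + (-(e * c)) := by rw [hz]; ring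
      rw [this]
      exact (Commute.all _ _).isNilpotent_add hy (nil_mul hen).neg
    exact ih _ hlt u z hznil hz2

/-- Uniqueness of unipotent square roots. -/
lemma sqrt_unique (h2 : Invertible (2 : R)) {y z : R} (hy : IsNilpotent (y - 1))
    (hz : IsNilpotent (z - 1)) (h : y ^ 2 = z ^ 2) : y = z := by
  have hsum : IsUnit (y + z) := by
    have hn : IsNilpotent (((y - 1) + (z - 1)) * ⅟(2:R)) := by
      exact nil_mul ((Commute.all _ _).isNilpotent_add hy hz)
    have hu := hn.isUnit_one_add
    have : y + z = 2 * (1 + ((y - 1) + (z - 1)) * ⅟(2:R)) := by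
      have h1 : (2 : R) * ⅟(2:R) = 1 := mul_invOf_self 2
      calc y + z = 2 * 1 + (2 * ⅟(2:R)) * ((y-1)+(z-1)) := by rw [h1]; ring
        _ = 2 * (1 + ((y - 1) + (z - 1)) * ⅟(2:R)) := by ring
    rw [this]
    exact (isUnit_of_invertible (2:R)).mul hu
  have : (y - z) * (y + z) = 0 := by
    have : y ^ 2 - z ^ 2 = 0 := by rw [h, sub_self]
    calc (y - z) * (y + z) = y ^ 2 - z ^ 2 := by ring
      _ = 0 := this
  have hinv : (y + z) * Ring.inverse (y + z) = 1 := Ring.mul_inverse_cancel _ hsum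
  have h4 : y - z = 0 := by
    calc y - z = (y - z) * ((y + z) * Ring.inverse (y + z)) := by rw [hinv, mul_one]
      _ = ((y - z) * (y + z)) * Ring.inverse (y + z) := by ring
      _ = 0 := by rw [this, zero_mul]
  exact sub_eq_zero.mp h4
end Aux


theorem unique_real_modulus_one_factorization {R : Type*} [CommRing R]
    (h2 : Invertible (2 : R)) (σ : R →+* R) (hσ : ∀ a : R, σ (σ a) = a)
    (x : R) (hx : IsNilpotent x) :
    (∃! p : R × R,
      (∃ a : R, IsNilpotent a ∧ p.1 = 1 + a) ∧ σ p.1 = p.1 ∧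
      (∃ b : R, IsNilpotent b ∧ p.2 = 1 + b) ∧ p.2 * σ p.2 = 1 ∧
      1 + x = p.1 * p.2) ∧
    (∀ p : R × R,
      ((∃ a : R, IsNilpotent a ∧ p.1 = 1 + a) ∧ σ p.1 = p.1 ∧
       (∃ b : R, IsNilpotent b ∧ p.2 = 1 + b) ∧ p.2 * σ p.2 = 1 ∧
       1 + x = p.1 * p.2) →
      ∀ D : R →+ R, (∀ a b : R, D (a * b) = D a * b + a * D b) →
        (∀ a : R, D (σ a) = σ (D a)) → D x = 0 →
        D p.1 = 0 ∧ D p.2 = 0) := by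
  have cancel : ∀ c a : R, IsUnit c → c * a = 0 → a = 0 := fun c a hc h =>
    hc.mul_left_cancel (h.trans (mul_zero c).symm)
  set u : R := 1 + x with hu
  have hσx : IsNilpotent (σ x) := hx.map σ
  set s : R := u * σ u with hsdef
  have hσu : σ u = 1 + σ x := by rw [hu, map_add, map_one]
  have hs1 : IsNilpotent (s - 1) := by
    have : s - 1 = x + (σ x + x * σ x) := by rw [hsdef, hu, hσu]; ring
    rw [this]
    exact (Commute.all _ _).isNilpotent_add hx
      ((Commute.all _ _).isNilpotent_add hσx (nil_mul hx))
  have hσs : σ s = s := by rw [hsdef, map_mul, hσ, mul_comm]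
  -- square root of s
  obtain ⟨n, hn⟩ := hs1
  obtain ⟨ρ, hρnil, hρ2⟩ : ∃ z : R, IsNilpotent (z - 1) ∧ z ^ 2 = s := by
    refine sqrt_exists h2 n s 1 (by simp) ?_
    have : (1 : R) ^ 2 - s = -(s - 1) := by ring
    rw [this, neg_pow, hn, mul_zero]
  have hσρ : σ ρ = ρ := by
    refine sqrt_unique h2 ?_ hρnil ?_
    · have : σ ρ - 1 = σ (ρ - 1) := by rw [map_sub, map_one]
      rw [this]; exact hρnil.map σ
    · rw [← map_pow, hρ2, hσs]
  have hρu : IsUnit ρ := by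
    have := hρnil.isUnit_one_add; rwa [add_sub_cancel] at this
  set ρi : R := Ring.inverse ρ with hρi
  have hρρi : ρ * ρi = 1 := Ring.mul_inverse_cancel ρ hρu
  set θ : R := ρi * u with hθdef
  have hρθ : ρ * θ = u := by rw [hθdef, ← mul_assoc, hρρi, one_mul]
  have hθnil : IsNilpotent (θ - 1) := by
    have : θ - 1 = (x - (ρ - 1)) * ρi := by
      rw [hθdef, hu]
      have : ρi * (1 + x) - 1 = ρi * (1 + x) - ρ * ρi := by rw [hρρi]
      rw [this]; ring
    rw [this]
    exact nil_mul ((Commute.all _ _).isNilpotent_sub hx hρnil)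
  have hσρi : σ ρi = ρi := by
    have h1 : ρ * σ ρi = 1 := by
      have := congrArg σ hρρi
      rwa [map_mul, map_one, hσρ] at this
    have h0 : ρ * (σ ρi - ρi) = 0 := by rw [mul_sub, h1, hρρi, sub_self]
    exact sub_eq_zero.mp (cancel _ _ hρu h0)
  have hθσθ : θ * σ θ = 1 := by
    rw [hθdef, map_mul, hσρi]
    calc ρi * u * (ρi * σ u) = (ρi * ρi) * s := by rw [hsdef]; ring
      _ = (ρi * ρi) * (ρ * ρ) := by rw [← hρ2]; ring_nf
      _ = (ρ * ρi) * (ρ * ρi) := by ring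
      _ = 1 := by rw [hρρi, mul_one]
  have hprop : (∃ a : R, IsNilpotent a ∧ ρ = 1 + a) ∧ σ ρ = ρ ∧
      (∃ b : R, IsNilpotent b ∧ θ = 1 + b) ∧ θ * σ θ = 1 ∧ 1 + x = ρ * θ := by
    exact ⟨⟨ρ - 1, hρnil, by ring⟩, hσρ, ⟨θ - 1, hθnil, by ring⟩, hθσθ, by rw [hρθ]⟩
  constructor
  · refine ⟨(ρ, θ), hprop, ?_⟩
    rintro ⟨ρ', θ'⟩ ⟨⟨a, ha, ha'⟩, hσ1, ⟨b, hb, hb'⟩, hmod, hfact⟩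
    simp only at ha' hσ1 hb' hmod hfact ⊢
    have hρ'2 : ρ' ^ 2 = s := by
      have hσu' : σ (ρ' * θ') = ρ' * σ θ' := by rw [map_mul, hσ1]
      calc ρ' ^ 2 = (ρ' * θ') * (ρ' * σ θ') - ρ' ^ 2 * (θ' * σ θ' - 1) := by ring
        _ = s := by rw [hmod, sub_self, mul_zero, sub_zero, hsdef, hfact, hσu']
    have hρ'ρ : ρ' = ρ := by
      refine sqrt_unique h2 ?_ hρnil (by rw [hρ'2, hρ2])
      rw [ha', add_sub_cancel_left]; exact ha
    have hθ'θ : θ' = θ := by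
      rw [hρ'ρ] at hfact
      have h0 : ρ * (θ' - θ) = 0 := by rw [mul_sub, hρθ, ← hfact, sub_self]
      exact sub_eq_zero.mp (cancel _ _ hρu h0)
    exact Prod.ext hρ'ρ hθ'θ
  · rintro ⟨p1, p2⟩ ⟨⟨a, ha, ha'⟩, hσ1, ⟨b, hb, hb'⟩, hmod, hfact⟩ D hD hDσ hDx
    simp only at ha' hσ1 hb' hmod hfact ⊢
    have hD1 : D 1 = 0 := by
      have h := hD 1 1
      rw [mul_one, mul_one, one_mul] at h
      exact (left_eq_add.mp h)
    have hDu : D u = 0 := by rw [hu, map_add, hD1, hDx, add_zero]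
    have hDs : D s = 0 := by
      rw [hsdef, hD, hDu, hDσ, hDu, map_zero, zero_mul, mul_zero, add_zero]
    have hs' : s = p1 ^ 2 := by
      have hσu' : σ (p1 * p2) = p1 * σ p2 := by rw [map_mul, hσ1]
      calc s = (p1 * p2) * (p1 * σ p2) := by rw [hsdef, hfact, hσu']
        _ = p1 ^ 2 * (p2 * σ p2) := by ring
        _ = p1 ^ 2 := by rw [hmod, mul_one]
    have hp1u : IsUnit p1 := by
      rw [ha']; exact ha.isUnit_one_add
    have hDp1 : D p1 = 0 := by
      have h0 : (2 * p1) * D p1 = 0 := by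
        have : D (p1 * p1) = 0 := by
          rw [← pow_two, ← hs', hDs]
        rw [hD] at this
        linear_combination this
      exact cancel _ _ ((isUnit_of_invertible (2:R)).mul hp1u) h0
    refine ⟨hDp1, ?_⟩
    have h0 : p1 * D p2 = 0 := by
      have : D (p1 * p2) = 0 := by rw [← hfact, hDu]
      rw [hD, hDp1, zero_mul, zero_add] at this
      exact this
    exact cancel _ _ hp1u h0
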